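/- arXiv:1907.09374 — 7 statements merged into one kernel-verified Lean document; each statement's English description precedes it below -/
import Mathlib

section
/- Let K be a field and let (c_n) be a sequence in K satisfying c_{n+1}(1 - c_n) = b·c_n + c for all n ≥ 1, with c_1 = c. If c ≠ 1, then c_n ≠ 1 for all n ≥ 1. -/
theorem stmt1 {K : Type*} [Field K] (b c : K) (hc : c ≠ 1)
    (cs : ℕ → K) (h1 : cs 1 = c)
    (hrec : ∀ n, 1 ≤ n → cs (n + 1) * (1 - cs n) = b * cs n + c) :
    ∀ n, 1 ≤ n → cs n ≠ 1 := by
  intro n hn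
  induction n with
  | zero => omega
  | succ m ih =>
    rcases Nat.eq_zero_or_pos m with hm | hm
    · subst hm; rw [h1]; exact hc
    · intro heq
      have ihm : cs m ≠ 1 := ih hm
      have r1 := hrec m hm
      have r2 := hrec (m + 1) (by omega)
      rw [heq] at r1 r2
      -- r2 : cs (m+2) * (1 - 1) = b * 1 + c
      have hb : b = -c := by
        have h0 : b + c = 0 := by simpa using r2.symm
        linear_combination h0
      rw [hb] at r1
      apply ihm
      have hkey : cs m * (1 - c) = 1 * (1 - c) := by linear_combination -r1
      exact mul_right_cancel₀ (sub_ne_zero_of_ne (Ne.symm hc)) hkey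
end

section
/- Let A be an associative K-algebra over a field K, let n ≥ 2, a, d ∈ K with (d, a) ≠ (1, 0), set e = 1 - d, and let m, Y ∈ A satisfy d·m·Y^{n-1}·m = e·Y^n·m + a·m·Y^n. Define e_k = e^k, a_k = (-a)^k and d_k = d·∑_{j=0}^{k-1} e^j·(-a)^{k-1-j}. Then for all k ≥ 1: d_k·m·Y^{kn-1}·m = e_k·Y^{kn}·m - a_k·m·Y^{kn}. -/
theorem stmt6 {K : Type*} [Field K] {A : Type*} [Ring A] [Algebra K A]
    (n : ℕ) (hn : 2 ≤ n) (a d e : K) (hda : (d, a) ≠ (1, 0)) (he : e = 1 - d)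
    (m Y : A)
    (h : d • (m * Y ^ (n - 1) * m) = e • (Y ^ n * m) + a • (m * Y ^ n)) :
    ∀ k, 1 ≤ k →
      (d * ∑ j ∈ Finset.range k, e ^ j * (-a) ^ (k - 1 - j)) •
          (m * Y ^ (k * n - 1) * m) =
        e ^ k • (Y ^ (k * n) * m) - (-a) ^ k • (m * Y ^ (k * n)) := by
  intro k hk
  induction k, hk using Nat.le_induction with
  | base =>
    simpa [sub_eq_add_neg] using h
  | succ k hk ih =>
    set Dk : K := d * ∑ j ∈ Finset.range k, e ^ j * (-a) ^ (k - 1 - j) with hDk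
    -- exponent arithmetic
    have epow1 : Y ^ ((k+1) * n - 1) = Y ^ (n-1) * Y ^ (k*n) := by
      rw [← pow_add]; congr 1; rw [Nat.succ_mul]; omega
    have epow2 : Y ^ ((k+1) * n) = Y ^ n * Y ^ (k*n) := by
      rw [← pow_add]; congr 1; rw [Nat.succ_mul]; omega
    have epow3 : Y ^ ((k+1) * n - 1) = Y ^ n * Y ^ (k*n - 1) := by
      rw [← pow_add]; congr 1; rw [Nat.succ_mul]
      have : 1 ≤ k * n := Nat.one_le_iff_ne_zero.mpr (by positivity)
      omega
    -- the sum identity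
    have hsum : (d * ∑ j ∈ Finset.range (k+1), e ^ j * (-a) ^ (k + 1 - 1 - j))
        = d * e ^ k - a * Dk := by
      rw [Finset.sum_range_succ]
      have hs : ∑ j ∈ Finset.range k, e ^ j * (-a) ^ (k + 1 - 1 - j)
          = (-a) * ∑ j ∈ Finset.range k, e ^ j * (-a) ^ (k - 1 - j) := by
        rw [Finset.mul_sum]
        refine Finset.sum_congr rfl fun j hj => ?_
        have hj' : j < k := Finset.mem_range.mp hj
        have : k + 1 - 1 - j = (k - 1 - j) + 1 := by omega
        rw [this, pow_succ]; ring
      rw [hs]; simp [hDk]; ring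
    -- h1 : multiply ih on the left by Y^n
    have h1 : Dk • (Y ^ n * (m * Y ^ (k*n - 1) * m))
        = e ^ k • (Y ^ ((k+1)*n) * m) - (-a) ^ k • (Y ^ n * (m * Y ^ (k*n))) := by
      have := congrArg (fun z => Y ^ n * z) ih
      simp only [mul_smul_comm, mul_sub] at this
      rw [this, epow2, mul_assoc]
    -- h2 : multiply h on the right by Y^(k*n)
    have h2 : d • (m * Y ^ (n-1) * m * Y ^ (k*n))
        = e • (Y ^ n * (m * Y ^ (k*n))) + a • (m * Y ^ ((k+1)*n)) := by
      have := congrArg (fun z => z * Y ^ (k*n)) h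
      simp only [smul_mul_assoc, add_mul] at this
      rw [this, epow2]
      simp only [mul_assoc]
    -- h3 : multiply ih on the left by m * Y^(n-1)
    have h3 : Dk • (m * Y ^ (n-1) * (m * Y ^ (k*n - 1) * m))
        = e ^ k • (m * Y ^ ((k+1)*n - 1) * m) - (-a) ^ k • (m * Y ^ (n-1) * m * Y ^ (k*n)) := by
      have := congrArg (fun z => m * Y ^ (n-1) * z) ih
      simp only [mul_smul_comm, mul_sub] at this
      rw [this, epow1]
      simp only [mul_assoc]
    -- h4 : multiply h on the right by Y^(k*n-1) * m
    have h4 : d • (m * Y ^ (n-1) * (m * Y ^ (k*n - 1) * m))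
        = e • (Y ^ n * (m * Y ^ (k*n - 1) * m)) + a • (m * Y ^ ((k+1)*n - 1) * m) := by
      have := congrArg (fun z => z * (Y ^ (k*n - 1) * m)) h
      simp only [smul_mul_assoc, add_mul] at this
      rw [show m * Y ^ (n-1) * (m * Y ^ (k*n-1) * m) = m * Y ^ (n-1) * m * (Y ^ (k*n-1) * m) by
        simp only [mul_assoc], this, epow3]
      simp only [mul_assoc]
    have key : d • (e ^ k • (m * Y ^ ((k+1)*n - 1) * m)
          - (-a) ^ k • (m * Y ^ (n-1) * m * Y ^ (k*n)))
        = Dk • (e • (Y ^ n * (m * Y ^ (k*n - 1) * m)) + a • (m * Y ^ ((k+1)*n - 1) * m)) := by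
      rw [← h3, ← h4]; exact smul_comm d Dk _
    rw [hsum]
    linear_combination (norm := module) key + (-a) ^ k • h2 + e • h1
end

section
/- Let A be an associative unital K-algebra, n ∈ ℕ, a ∈ K, and m, Y ∈ A satisfying m·Y^k·m = 0 for 0 ≤ k ≤ n - 2 (in particular m² = 0 when n ≥ 2) and m·Y^{n-1}·m = a·∑_{j=0}^{n} Y^j·m·Y^{n-j} - a²·Y^{n+1}. Then (m - a·Y)^{n+1} = 0. -/
theorem stmt13 {K : Type*} [Field K] {A : Type*} [Ring A] [Algebra K A]
    (n : ℕ) (hn : 1 ≤ n) (a : K) (m Y : A)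
    (hvan : ∀ k, k + 2 ≤ n → m * Y ^ k * m = 0)
    (hrel : m * Y ^ (n - 1) * m =
      a • (∑ j ∈ Finset.range (n + 1), Y ^ j * m * Y ^ (n - j)) - (a ^ 2) • Y ^ (n + 1)) :
    (m - a • Y) ^ (n + 1) = 0 := by
  obtain ⟨p, rfl⟩ : ∃ p, n = p + 1 := ⟨n - 1, by omega⟩
  simp only [Nat.add_sub_cancel] at hrel
  have key : ∀ k, k + 1 ≤ p + 1 → (m - a • Y) ^ (k + 1) =
      ((-a) ^ (k + 1)) • Y ^ (k + 1) +
        ((-a) ^ k) • ∑ j ∈ Finset.range (k + 1), Y ^ j * m * Y ^ (k - j) := by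
    intro k hk
    induction k with
    | zero =>
      simp [sub_eq_add_neg, add_comm, neg_smul]
    | succ k ih =>
      have h1 : k + 1 ≤ p + 1 := by omega
      have hSm : (∑ j ∈ Finset.range (k + 1), Y ^ j * m * Y ^ (k - j)) * m = 0 := by
        rw [Finset.sum_mul]
        apply Finset.sum_eq_zero
        intro j hj
        have h0 : m * Y ^ (k - j) * m = 0 := hvan _ (by
          simp only [Finset.mem_range] at hj; omega)
        rw [mul_assoc, mul_assoc, ← mul_assoc m, h0, mul_zero]
      have hSY : (∑ j ∈ Finset.range (k + 1), Y ^ j * m * Y ^ (k - j)) * Y =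
          ∑ j ∈ Finset.range (k + 1), Y ^ j * m * Y ^ (k + 1 - j) := by
        rw [Finset.sum_mul]
        apply Finset.sum_congr rfl
        intro j hj
        simp only [Finset.mem_range] at hj
        have : k + 1 - j = (k - j) + 1 := by omega
        rw [this, pow_succ, mul_assoc]
      have hsplit : ∑ j ∈ Finset.range (k + 2), Y ^ j * m * Y ^ (k + 1 - j) =
          (∑ j ∈ Finset.range (k + 1), Y ^ j * m * Y ^ (k + 1 - j)) +
            Y ^ (k + 1) * m := by
        rw [Finset.sum_range_succ]
        simp
      rw [pow_succ, ih h1, hsplit]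
      rw [show k + 1 + 1 = k + 2 from rfl]
      simp only [mul_sub, add_mul, smul_mul_assoc, mul_smul_comm, smul_smul,
        hSm, hSY, smul_zero, smul_add, add_zero, ← pow_succ]
      module
  have hxn := key p le_rfl
  have hSm : (∑ j ∈ Finset.range (p + 1), Y ^ j * m * Y ^ (p - j)) * m =
      m * Y ^ p * m := by
    rw [Finset.sum_mul, Finset.sum_eq_single 0]
    · simp
    · intro j hj hj0
      have h0 : m * Y ^ (p - j) * m = 0 := hvan _ (by
        simp only [Finset.mem_range] at hj; omega)
      rw [mul_assoc, mul_assoc, ← mul_assoc m, h0, mul_zero]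
    · intro h; simp at h
  have hSY : (∑ j ∈ Finset.range (p + 1), Y ^ j * m * Y ^ (p - j)) * Y =
      ∑ j ∈ Finset.range (p + 1), Y ^ j * m * Y ^ (p + 1 - j) := by
    rw [Finset.sum_mul]
    apply Finset.sum_congr rfl
    intro j hj
    simp only [Finset.mem_range] at hj
    have : p + 1 - j = (p - j) + 1 := by omega
    rw [this, pow_succ, mul_assoc]
  have hsplit : ∑ j ∈ Finset.range (p + 1 + 1), Y ^ j * m * Y ^ (p + 1 - j) =
      (∑ j ∈ Finset.range (p + 1), Y ^ j * m * Y ^ (p + 1 - j)) + Y ^ (p + 1) * m := by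
    rw [Finset.sum_range_succ]; simp
  rw [hsplit] at hrel
  rw [pow_succ, hxn]
  simp only [mul_sub, add_mul, smul_mul_assoc, mul_smul_comm, smul_smul,
    hSm, hSY, hrel, smul_sub, smul_add, ← pow_succ]
  module
end

section
/- Fix n ≥ 2 and let (L_1, …, L_{r_0}) be a finite quasi-balanced sequence: L_1 = n, L_{j+1} - L_j ∈ {n, n+1} for 1 ≤ j < r_0, and L_r - 1 ≤ L_j + L_{r-j} ≤ L_r for all 0 < j < r ≤ r_0. Then at least one of the extended sequences (L_1, …, L_{r_0}, L_{r_0} + n) and (L_1, …, L_{r_0}, L_{r_0} + n + 1) is quasi-balanced. -/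
theorem stmt15 (n : ℕ) (hn : 2 ≤ n) (r0 : ℕ) (hr0 : 1 ≤ r0)
    (L : ℕ → ℕ) (hL1 : L 1 = n)
    (hstep : ∀ j, 1 ≤ j → j < r0 → L (j + 1) = L j + n ∨ L (j + 1) = L j + (n + 1))
    (hqb : ∀ r j, 0 < j → j < r → r ≤ r0 →
      L r - 1 ≤ L j + L (r - j) ∧ L j + L (r - j) ≤ L r) :
    ∃ c, (c = n ∨ c = n + 1) ∧
      (∀ r j, 0 < j → j < r → r ≤ r0 + 1 →
        Function.update L (r0 + 1) (L r0 + c) r - 1 ≤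
            Function.update L (r0 + 1) (L r0 + c) j +
              Function.update L (r0 + 1) (L r0 + c) (r - j) ∧
          Function.update L (r0 + 1) (L r0 + c) j +
              Function.update L (r0 + 1) (L r0 + c) (r - j) ≤
            Function.update L (r0 + 1) (L r0 + c) r) := by
  -- Range lemma: for 1 ≤ j ≤ r0, the sum L j + L (r0+1-j) is within 1 of L r0 + n.
  have hrange : ∀ j, 1 ≤ j → j ≤ r0 →
      L r0 + n ≤ L j + L (r0 + 1 - j) + 1 ∧ L j + L (r0 + 1 - j) ≤ L r0 + n + 1 := by
    intro j hj1 hj2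
    rcases eq_or_lt_of_le hj2 with h | hlt
    · subst h
      have e : j + 1 - j = 1 := by omega
      rw [e, hL1]; omega
    · have hkstep := hstep (r0 - j) (by omega) (by omega)
      have hq := hqb r0 j hj1 hlt le_rfl
      have e1 : r0 - j + 1 = r0 + 1 - j := by omega
      rw [e1] at hkstep
      omega
  -- Key lemma: the extremes L r0 + n - 1 and L r0 + n + 1 cannot both occur.
  have hkey : ∀ j0 j1, 1 ≤ j0 → j0 ≤ r0 → 1 ≤ j1 → j1 ≤ r0 →
      L j0 + L (r0 + 1 - j0) + 1 ≤ L r0 + n →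
      L r0 + n + 1 ≤ L j1 + L (r0 + 1 - j1) → False := by
    have main : ∀ j0 j1, 1 ≤ j0 → j1 ≤ r0 → j0 < j1 →
        L j0 + L (r0 + 1 - j0) + 1 ≤ L r0 + n →
        L r0 + n + 1 ≤ L j1 + L (r0 + 1 - j1) → False := by
      intro j0 j1 h1 h2 hlt hS0 hS1
      have hA := hqb (r0 + 1 - j0) (j1 - j0) (by omega) (by omega) (by omega)
      have eA : r0 + 1 - j0 - (j1 - j0) = r0 + 1 - j1 := by omega
      rw [eA] at hA
      have hB := hqb j1 (j1 - j0) (by omega) (by omega) h2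
      have eB : j1 - (j1 - j0) = j0 := by omega
      rw [eB] at hB
      omega
    intro j0 j1 h01 h02 h11 h12 hS0 hS1
    rcases lt_trichotomy j0 j1 with h | h | h
    · exact main j0 j1 h01 h12 h hS0 hS1
    · subst h; omega
    · have e0 : r0 + 1 - (r0 + 1 - j0) = j0 := by omega
      have e1 : r0 + 1 - (r0 + 1 - j1) = j1 := by omega
      exact main (r0 + 1 - j0) (r0 + 1 - j1) (by omega) (by omega) (by omega)
        (by rw [e0]; omega) (by rw [e1]; omega)
  -- Choose c depending on whether the high extreme occurs.
  by_cases hex : ∃ j, 1 ≤ j ∧ j ≤ r0 ∧ L r0 + n + 1 ≤ L j + L (r0 + 1 - j)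
  · refine ⟨n + 1, Or.inr rfl, ?_⟩
    intro r j hj hjr hr
    by_cases hr' : r = r0 + 1
    · subst hr'
      obtain ⟨j1, hj11, hj12, hj13⟩ := hex
      rw [Function.update_of_ne (show j ≠ r0 + 1 by omega),
        Function.update_of_ne (show r0 + 1 - j ≠ r0 + 1 by omega),
        Function.update_self]
      have h1 := hrange j (by omega) (by omega)
      have hlow : L r0 + n ≤ L j + L (r0 + 1 - j) := by
        by_contra h
        exact hkey j j1 (by omega) (by omega) hj11 hj12 (by omega) hj13
      omega
    · rw [Function.update_of_ne (show j ≠ r0 + 1 by omega),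
        Function.update_of_ne (show r - j ≠ r0 + 1 by omega),
        Function.update_of_ne hr']
      exact hqb r j hj hjr (by omega)
  · refine ⟨n, Or.inl rfl, ?_⟩
    intro r j hj hjr hr
    by_cases hr' : r = r0 + 1
    · subst hr'
      rw [Function.update_of_ne (show j ≠ r0 + 1 by omega),
        Function.update_of_ne (show r0 + 1 - j ≠ r0 + 1 by omega),
        Function.update_self]
      have h1 := hrange j (by omega) (by omega)
      have hhigh : ¬ (L r0 + n + 1 ≤ L j + L (r0 + 1 - j)) := fun h =>
        hex ⟨j, by omega, by omega, h⟩
      omega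
    · rw [Function.update_of_ne (show j ≠ r0 + 1 by omega),
        Function.update_of_ne (show r - j ≠ r0 + 1 by omega),
        Function.update_of_ne hr']
      exact hqb r j hj hjr (by omega)
end

section
/- Fix n ≥ 2 and let (L_1, …, L_r) be a finite quasi-balanced sequence (L_1 = n, consecutive differences in {n, n+1}, and L_t - 1 ≤ L_j + L_{t-j} ≤ L_t for 0 < j < t ≤ r). Then there exists an infinite quasi-balanced sequence L' ∈ Δ(n, n+1) with L'_j = L_j for all j ≤ r. -/
private def ext16 (r : ℕ) (L : ℕ → ℕ) : ℕ → ℕ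
  | j =>
    if h : r < j then
      (Finset.Icc 1 (j - 1)).attach.sup (fun i => ext16 r L i.1 + ext16 r L (j - i.1))
    else L j
  decreasing_by
  · have := Finset.mem_Icc.mp i.2; omega
  · have := Finset.mem_Icc.mp i.2; omega

private theorem ext16_le (r : ℕ) (L : ℕ → ℕ) (j : ℕ) (hj : j ≤ r) :
    ext16 r L j = L j := by
  rw [ext16]; simp [Nat.not_lt.mpr hj]

private theorem ext16_gt (r : ℕ) (L : ℕ → ℕ) (j : ℕ) (hj : r < j) :
    ext16 r L j = (Finset.Icc 1 (j - 1)).sup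
      (fun i => ext16 r L i + ext16 r L (j - i)) := by
  conv_lhs => rw [ext16]
  rw [dif_pos hj]
  exact Finset.sup_attach (Finset.Icc 1 (j - 1))
    (fun i => ext16 r L i + ext16 r L (j - i))

theorem stmt16 (n : ℕ) (hn : 2 ≤ n) (r : ℕ) (hr : 1 ≤ r)
    (L : ℕ → ℕ) (hL1 : L 1 = n)
    (hstep : ∀ j, 1 ≤ j → j < r → L (j + 1) = L j + n ∨ L (j + 1) = L j + (n + 1))
    (hqb : ∀ t j, 0 < j → j < t → t ≤ r →
      L t - 1 ≤ L j + L (t - j) ∧ L j + L (t - j) ≤ L t) :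
    ∃ L' : ℕ → ℕ, (∀ j, j ≤ r → L' j = L j) ∧ L' 1 = n ∧
      (∀ j, 1 ≤ j → L' (j + 1) = L' j + n ∨ L' (j + 1) = L' j + (n + 1)) ∧
      (∀ t j, 0 < j → j < t →
        L' t - 1 ≤ L' j + L' (t - j) ∧ L' j + L' (t - j) ≤ L' t) := by
  set L' : ℕ → ℕ := ext16 r L with hL'
  have hagree : ∀ j, j ≤ r → L' j = L j := fun j hj => ext16_le r L j hj
  have hL'1 : L' 1 = n := by rw [hagree 1 hr, hL1]
  -- main induction
  have main : ∀ m, r ≤ m →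
      (∀ t j, 0 < j → j < t → t ≤ m →
        L' t - 1 ≤ L' j + L' (t - j) ∧ L' j + L' (t - j) ≤ L' t) ∧
      (∀ j, 1 ≤ j → j < m → L' (j + 1) = L' j + n ∨ L' (j + 1) = L' j + (n + 1)) := by
    intro m hm
    induction m, hm using Nat.le_induction with
    | base =>
      constructor
      · intro t j hj hjt htr
        rw [hagree t htr, hagree j (by omega), hagree (t - j) (by omega)]
        exact hqb t j hj hjt htr
      · intro j hj hjr
        rw [hagree (j + 1) (by omega), hagree j (by omega)]
        exact hstep j hj hjr
    | succ m hm ih =>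
      obtain ⟨ihqb, ihst⟩ := ih
      set S : ℕ → ℕ := fun i => L' i + L' (m + 1 - i) with hS
      have hSdef : ∀ i, S i = L' i + L' (m + 1 - i) := fun _ => rfl
      have hSm : S m = L' m + n := by
        rw [hSdef, show m + 1 - m = 1 from by omega, hL'1]
      -- upper bound on each split sum
      have hub : ∀ i ∈ Finset.Icc 1 m, S i ≤ L' m + (n + 1) := by
        intro i hi
        rw [Finset.mem_Icc] at hi
        rcases eq_or_lt_of_le hi.2 with h | h
        · rw [h, hSm]; omega
        · have h1 : m + 1 - i = (m - i) + 1 := by omega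
          have h2 : L' (m - i + 1) ≤ L' (m - i) + (n + 1) := by
            rcases ihst (m - i) (by omega) (by omega) with he | he <;> omega
          have h3 := (ihqb m i hi.1 h (le_refl m)).2
          have : m - (m - i)  = i := by omega  -- not needed maybe
          rw [hSdef, h1]
          calc L' i + L' (m - i + 1) ≤ L' i + (L' (m - i) + (n + 1)) := by omega
            _ ≤ L' m + (n + 1) := by
              rw [show m - i = m - i from rfl]
              have := h3
              omega
      -- splits differ by at most one (strict order case)
      have hlt : ∀ i k, 1 ≤ i → i < k → k ≤ m → S k ≤ S i + 1 := by
        intro i k hi hik hkm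
        have h1 := (ihqb k i (by omega) hik (by omega)).1
        have h2 := (ihqb (m + 1 - i) (m + 1 - k) (by omega) (by omega) (by omega)).2
        have h3 : (m + 1 - i) - (m + 1 - k) = k - i := by omega
        rw [h3] at h2
        -- h1 : L' k - 1 ≤ L' i + L' (k - i)
        -- h2 : L' (m+1-k) + L' (k-i) ≤ L' (m+1-i)
        rw [hSdef, hSdef]
        omega
      have hsym : ∀ i, 1 ≤ i → i ≤ m → S i = S (m + 1 - i) := by
        intro i h1 h2
        have : m + 1 - (m + 1 - i) = i := by omega
        simp only [hS, this]
        omega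
      have hdiff : ∀ i k, 1 ≤ i → i ≤ m → 1 ≤ k → k ≤ m → S k ≤ S i + 1 := by
        intro i k hi1 hi2 hk1 hk2
        rcases lt_trichotomy i k with h | h | h
        · exact hlt i k hi1 h hk2
        · rw [h]; omega
        · rw [hsym i hi1 hi2, hsym k hk1 hk2]
          exact hlt (m + 1 - i) (m + 1 - k) (by omega) (by omega) (by omega)
      have hne : (Finset.Icc 1 m).Nonempty := ⟨1, by rw [Finset.mem_Icc]; omega⟩
      have hmm : m ∈ Finset.Icc 1 m := by rw [Finset.mem_Icc]; omega
      have hEm : L' (m + 1) = (Finset.Icc 1 m).sup S := by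
        have := ext16_gt r L (m + 1) (by omega)
        simpa using this
      have hub' : L' (m + 1) ≤ L' m + (n + 1) := by
        rw [hEm]; exact Finset.sup_le hub
      have hlb' : L' m + n ≤ L' (m + 1) := by
        rw [hEm]
        calc L' m + n = S m := hSm.symm
          _ ≤ _ := Finset.le_sup hmm
      have hstepnew : L' (m + 1) = L' m + n ∨ L' (m + 1) = L' m + (n + 1) := by omega
      -- lower bound for quasi-balance at t = m + 1
      obtain ⟨i₀, hi₀, hsupeq⟩ := Finset.exists_mem_eq_sup (Finset.Icc 1 m) hne S
      rw [Finset.mem_Icc] at hi₀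
      have hqbnew : ∀ j, 0 < j → j < m + 1 →
          L' (m + 1) - 1 ≤ L' j + L' (m + 1 - j) ∧ L' j + L' (m + 1 - j) ≤ L' (m + 1) := by
        intro j hj hjm
        constructor
        · have h1 : L' (m + 1) = L' i₀ + L' (m + 1 - i₀) := by
            rw [hEm, hsupeq, hSdef]
          have h2 := hdiff j i₀ hj (by omega) hi₀.1 hi₀.2
          rw [hSdef, hSdef] at h2
          omega
        · rw [hEm]
          exact Finset.le_sup (f := S) (by rw [Finset.mem_Icc]; omega)
      constructor
      · intro t j hj hjt htm
        rcases eq_or_lt_of_le htm with h | h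
        · have := hqbnew j hj (by omega)
          rw [h]; exact this
        · exact ihqb t j hj hjt (by omega)
      · intro j hj hjm
        rcases eq_or_lt_of_le (by omega : j + 1 ≤ m + 1) with h | h
        · have : j = m := by omega
          rw [this]; exact hstepnew
        · exact ihst j hj (by omega)
  refine ⟨L', hagree, hL'1, ?_, ?_⟩
  · intro j hj
    exact (main (r + j + 1) (by omega)).2 j hj (by omega)
  · intro t j hj hjt
    exact (main (r + t) (by omega)).1 t j hj hjt (by omega)
end

section
/- Fix n ≥ 2 and let L ∈ Δ(n, n+1) (so L_1 = n and L_{j+1} - L_j ∈ {n, n+1}) be a sequence that is NOT quasi-balanced. Then there exist k, r ∈ ℕ such that either (1) L_{k+r} = L_k + L_r - 1 and L_r - L_{r-1} = n + 1, or (2) L_{k+r} = L_k + L_r + 2 and L_{r+1} - L_r = n + 1. -/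
theorem stmt17 (n : ℕ) (hn : 2 ≤ n) (L : ℕ → ℕ) (hL1 : L 1 = n)
    (hstep : ∀ j, 1 ≤ j → L (j + 1) = L j + n ∨ L (j + 1) = L j + (n + 1))
    (hnqb : ¬ ∀ t j, 0 < j → j < t →
      L t - 1 ≤ L j + L (t - j) ∧ L j + L (t - j) ≤ L t) :
    ∃ k r, 1 ≤ k ∧ 1 ≤ r ∧
      ((L (k + r) + 1 = L k + L r ∧ L r = L (r - 1) + (n + 1)) ∨
        (L (k + r) = L k + L r + 2 ∧ L (r + 1) = L r + (n + 1))) := by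
  classical
  have hlow : ∀ j, 1 ≤ j → L j + n ≤ L (j + 1) := by
    intro j hj; rcases hstep j hj with h | h <;> omega
  have hhigh : ∀ j, 1 ≤ j → L (j + 1) ≤ L j + (n + 1) := by
    intro j hj; rcases hstep j hj with h | h <;> omega
  push_neg at hnqb
  obtain ⟨t0, j0, h01, h02, hbad⟩ := hnqb
  have hPex : ∃ t, ∃ j, 0 < j ∧ j < t ∧
      (L j + L (t - j) + 1 < L t ∨ L t < L j + L (t - j)) := by
    refine ⟨t0, j0, h01, h02, ?_⟩
    by_cases h : L t0 - 1 ≤ L j0 + L (t0 - j0)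
    · exact Or.inr (hbad h)
    · left; omega
  obtain ⟨t, ⟨jw, hjw1, hjwt, hjwbad⟩, htmin⟩ :
      ∃ t, (∃ j, 0 < j ∧ j < t ∧
          (L j + L (t - j) + 1 < L t ∨ L t < L j + L (t - j))) ∧
        ∀ m, m < t → ¬ ∃ j, 0 < j ∧ j < m ∧
          (L j + L (m - j) + 1 < L m ∨ L m < L j + L (m - j)) :=
    ⟨Nat.find hPex, Nat.find_spec hPex, fun m hm => Nat.find_min hPex hm⟩
  -- bounds for the step at t-1
  have hCt : L (t - 1) + n ≤ L t ∧ L t ≤ L (t - 1) + (n + 1) := by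
    have e : t - 1 + 1 = t := by omega
    have a := hlow (t - 1) (by omega)
    have b := hhigh (t - 1) (by omega)
    rw [e] at a b
    exact ⟨a, b⟩
  have ht3 : 3 ≤ t := by
    by_contra h
    have ht2 : t = 2 := by omega
    subst ht2
    have hjweq : jw = 1 := by omega
    subst hjweq
    norm_num at hjwbad hCt
    omega
  -- range lemma: Δ_{t,j} ∈ [-1, 2] for all 0 < j < t
  have hrange : ∀ j, 0 < j → j < t →
      L t ≤ L j + L (t - j) + 2 ∧ L j + L (t - j) ≤ L t + 1 := by
    intro j hj hjt
    rcases eq_or_lt_of_le (Nat.succ_le_of_lt hjt) with heq | hlt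
    · -- j = t - 1
      have e1 : t - j = 1 := by omega
      have e2 : t - 1 = j := by omega
      rw [e2] at hCt
      rw [e1]
      omega
    · -- j + 1 < t, use quasi-balance at t - 1
      have hq := htmin (t - 1) (by omega)
      have hb1 : L (t - 1) ≤ L j + L (t - 1 - j) + 1 := by
        by_contra hc
        exact hq ⟨j, hj, by omega, Or.inl (by omega)⟩
      have hb2 : L j + L (t - 1 - j) ≤ L (t - 1) := by
        by_contra hc
        exact hq ⟨j, hj, by omega, Or.inr (by omega)⟩
      have e : t - 1 - j + 1 = t - j := by omega
      have a := hlow (t - 1 - j) (by omega)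
      have b := hhigh (t - 1 - j) (by omega)
      rw [e] at a b
      omega
  have hmain := hrange jw hjw1 hjwt
  rcases hjwbad with hb | hb
  · -- Δ = 2 case
    have hQex : ∃ j, 0 < j ∧ j < t ∧ L t = L j + L (t - j) + 2 :=
      ⟨jw, hjw1, hjwt, by omega⟩
    obtain ⟨j1, ⟨hj1, hjt1, hjeq⟩, hjmin⟩ :
        ∃ j1, (0 < j1 ∧ j1 < t ∧ L t = L j1 + L (t - j1) + 2) ∧
          ∀ m, m < j1 → ¬(0 < m ∧ m < t ∧ L t = L m + L (t - m) + 2) :=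
      ⟨Nat.find hQex, Nat.find_spec hQex, fun m hm => Nat.find_min hQex hm⟩
    have hj12 : 2 ≤ j1 := by
      by_contra h
      have hj1' : j1 = 1 := by omega
      subst hj1'
      omega
    have hmin' := hjmin (j1 - 1) (by omega)
    have hr1 := hrange (j1 - 1) (by omega) (by omega)
    have hne : L t ≠ L (j1 - 1) + L (t - (j1 - 1)) + 2 := fun h =>
      hmin' ⟨by omega, by omega, h⟩
    have estep := hlow (j1 - 1) (by omega)
    have e1 : j1 - 1 + 1 = j1 := by omega
    rw [e1] at estep
    have e2 : t - (j1 - 1) = t - j1 + 1 := by omega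
    rw [e2] at hr1 hne
    have b := hhigh (t - j1) (by omega)
    refine ⟨j1, t - j1, by omega, by omega, Or.inr ⟨?_, ?_⟩⟩
    · have e3 : j1 + (t - j1) = t := by omega
      rw [e3]; omega
    · omega
  · -- Δ = -1 case
    have hQex : ∃ j, 0 < j ∧ j < t ∧ L j + L (t - j) = L t + 1 :=
      ⟨jw, hjw1, hjwt, by omega⟩
    obtain ⟨r, ⟨hr1, hrt, hreq⟩, hrmin⟩ :
        ∃ r, (0 < r ∧ r < t ∧ L r + L (t - r) = L t + 1) ∧
          ∀ m, m < r → ¬(0 < m ∧ m < t ∧ L m + L (t - m) = L t + 1) :=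
      ⟨Nat.find hQex, Nat.find_spec hQex, fun m hm => Nat.find_min hQex hm⟩
    have hr2 : 2 ≤ r := by
      by_contra h
      have hr' : r = 1 := by omega
      subst hr'
      omega
    have hrr := hrange (r - 1) (by omega) (by omega)
    have hne : L (r - 1) + L (t - (r - 1)) ≠ L t + 1 := fun h =>
      hrmin (r - 1) (by omega) ⟨by omega, by omega, h⟩
    have e2 : t - (r - 1) = t - r + 1 := by omega
    rw [e2] at hrr hne
    have a := hlow (t - r) (by omega)
    have b := hhigh (r - 1) (by omega)
    have e1 : r - 1 + 1 = r := by omega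
    rw [e1] at b
    refine ⟨t - r, r, by omega, by omega, Or.inl ⟨?_, ?_⟩⟩
    · have e3 : t - r + r = t := by omega
      rw [e3]; omega
    · omega
end

section
/- Let K be a field, let Δ(n,n+1) with n ≥ 2 and L ∈ Δ(n, n+1), and suppose there exist k, r with L_{k+r} = L_k + L_r + 2 and L_{r+1} > L_r + 2. Let a ∈ K \ {0, -1}, d = 1/(a+1), and let m be the infinite matrix with rows m_{j,*} = E_0 - E_1 for j < L_1, m_{j,*} = d^t(E_0 - E_1) for L_t < j < L_{t+1}, and m_{L_t,*} = d^t E_0 - d^{t-1} E_1 + a E_{L_t + 1}. Then (m·Y^{L_r+1}·m)_{L_k, L_{r+k}+1} = a² ≠ 0; in particular m·Y^{L_r+1}·m ≠ 0. -/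
theorem stmt18 {K : Type*} [Field K] (n : ℕ) (hn : 2 ≤ n)
    (L : ℕ → ℕ) (hL1 : L 1 = n)
    (hstep : ∀ j, 1 ≤ j → L (j + 1) = L j + n ∨ L (j + 1) = L j + (n + 1))
    (k r : ℕ) (hk : 1 ≤ k) (hr : 1 ≤ r)
    (hkr : L (k + r) = L k + L r + 2) (hgap : L r + 2 < L (r + 1))
    (a : K) (ha0 : a ≠ 0) (ha1 : a ≠ -1) (d : K) (hd : d = (a + 1)⁻¹)
    (M : ℕ → ℕ → K)
    (hrow0 : ∀ j, j < L 1 → ∀ i, M j i = if i = 0 then 1 else if i = 1 then -1 else 0)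
    (hrowmid : ∀ t, 1 ≤ t → ∀ j, L t < j → j < L (t + 1) → ∀ i,
      M j i = d ^ t * (if i = 0 then 1 else if i = 1 then -1 else 0))
    (hrowL : ∀ t, 1 ≤ t → ∀ i,
      M (L t) i = if i = 0 then d ^ t else if i = 1 then -d ^ (t - 1)
        else if i = L t + 1 then a else 0) :
    (∑ᶠ v : ℕ, M (L k) v * M (v + (L r + 1)) (L (r + k) + 1)) = a ^ 2 ∧ a ^ 2 ≠ 0 := by
  have hge : ∀ t, 1 ≤ t → n ≤ L t := by
    intro t ht
    induction t with
    | zero => omega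
    | succ s ih =>
      rcases Nat.eq_or_lt_of_le ht with h | h
      · have hs0 : s = 0 := by omega
        subst hs0
        simp [hL1]
      · have hs : 1 ≤ s := by omega
        rcases hstep s hs with h' | h' <;> omega
  have hLk : 2 ≤ L k := le_trans hn (hge k hk)
  have hLrk : 2 ≤ L (r + k) := le_trans hn (hge (r + k) (by omega))
  have hrk : L (r + k) = L (k + r) := by rw [Nat.add_comm]
  constructor
  · have hsupp : (Function.support fun v => M (L k) v * M (v + (L r + 1)) (L (r + k) + 1))
        ⊆ (↑({0, 1, L k + 1} : Finset ℕ) : Set ℕ) := by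
      intro v hv
      simp only [Finset.coe_insert, Finset.coe_singleton, Set.mem_insert_iff,
        Set.mem_singleton_iff]
      by_contra hmem
      push_neg at hmem
      apply hv
      have : M (L k) v = 0 := by
        rw [hrowL k hk v, if_neg hmem.1, if_neg hmem.2.1, if_neg hmem.2.2]
      simp [this]
    rw [finsum_eq_finset_sum_of_support_subset _ hsupp]
    have h01 : (0 : ℕ) ≠ 1 := by omega
    have h0L : (0 : ℕ) ≠ L k + 1 := by omega
    have h1L : (1 : ℕ) ≠ L k + 1 := by omega
    rw [Finset.sum_insert (by simp [h01, h0L]), Finset.sum_insert (by simp [h1L]; omega),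
      Finset.sum_singleton]
    have hterm0 : M (0 + (L r + 1)) (L (r + k) + 1) = 0 := by
      rw [Nat.zero_add, hrowmid r hr (L r + 1) (by omega) (by omega)]
      rw [if_neg (by omega), if_neg (by omega), mul_zero]
    have hterm1 : M (1 + (L r + 1)) (L (r + k) + 1) = 0 := by
      have : 1 + (L r + 1) = L r + 2 := by omega
      rw [this, hrowmid r hr (L r + 2) (by omega) hgap]
      rw [if_neg (by omega), if_neg (by omega), mul_zero]
    have hrowidx : L k + 1 + (L r + 1) = L (r + k) := by omega
    have htermL1 : M (L k) (L k + 1) = a := by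
      rw [hrowL k hk]
      rw [if_neg (by omega), if_neg (by omega), if_pos rfl]
    have htermL2 : M (L k + 1 + (L r + 1)) (L (r + k) + 1) = a := by
      rw [hrowidx, hrowL (r + k) (by omega)]
      rw [if_neg (by omega), if_neg (by omega), if_pos rfl]
    rw [hterm0, hterm1, htermL1, htermL2, mul_zero, mul_zero, zero_add, zero_add, sq]
  · exact pow_ne_zero 2 ha0
end
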